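/- Let n = 1 (two variables). For every k ≥ 2, d ≥ 2 and every 0 ≤ j ≤ d−2, the Hilbert function of R = ℂ[x₀,x₁]/I_{1,k,d} satisfies HF(R; (k−1)d + j) = 1 + (k−1)(d−j) − k. In particular, the conjectured formula HF(R; i) = Σ_h N_h·( C(1 + (i−h)/k, 1) − C(1+j, 1) ) — the sum over integers h with 0 ≤ h < (k−1)(d−j) and i − h ∈ kℕ, where N_h = #{g ∈ (ℤ/kℤ)² : wt(g) = h} — holds for n = 1. -/

import Mathlib

section UnivariateCore
open Polynomial Finset Module
open Polynomial

lemma hasse_dvd (p : ℂ[X]) (e : ℂ) (n : ℕ) :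
    (X - C e) ^ n ∣ p ↔ ∀ β < n, (Polynomial.hasseDeriv β p).eval e = 0 := by
  rw [Polynomial.X_sub_C_pow_dvd_iff, Polynomial.X_pow_dvd_iff]
  constructor
  · intro h β hβ
    have := h β hβ
    rwa [← Polynomial.taylor_apply, Polynomial.taylor_coeff] at this
  · intro h d hd
    rw [← Polynomial.taylor_apply, Polynomial.taylor_coeff]
    exact h d hd

open Polynomial Finset

noncomputable def pairB (N : ℕ) : ℂ[X] →ₗ[ℂ] ℂ[X] →ₗ[ℂ] ℂ :=
  LinearMap.mk₂ ℂ
    (fun f h => ∑ s ∈ Finset.range (N+1),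
      (s.factorial * (N-s).factorial : ℂ) * f.coeff s * h.coeff (N-s))
    (by intro m₁ m₂ n; rw [← Finset.sum_add_distrib]; refine Finset.sum_congr rfl fun s _ => ?_
        simp [coeff_add]; ring)
    (by intro a m n; simp only [smul_eq_mul, Finset.mul_sum]
        refine Finset.sum_congr rfl fun s _ => ?_
        simp [coeff_smul, smul_eq_mul]; ring)
    (by intro m n₁ n₂; rw [← Finset.sum_add_distrib]; refine Finset.sum_congr rfl fun s _ => ?_
        simp [coeff_add]; ring)
    (by intro a m n; simp only [smul_eq_mul, Finset.mul_sum]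
        refine Finset.sum_congr rfl fun s _ => ?_
        simp [coeff_smul, smul_eq_mul]; ring)

lemma pair_reflect (N : ℕ) (f h : ℂ[X]) :
    pairB N (reflect N f) h
      = ∑ t ∈ Finset.range (N+1), (t.factorial * (N-t).factorial : ℂ) * f.coeff t * h.coeff t := by
  have : ∀ s ∈ Finset.range (N+1),
      ((s.factorial * (N-s).factorial : ℂ)) * (reflect N f).coeff s * h.coeff (N-s)
      = (fun t => (t.factorial * (N-t).factorial : ℂ) * f.coeff t * h.coeff t) (N - s) := by
    intro s hs
    rw [Finset.mem_range] at hs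
    have hsN : s ≤ N := by omega
    rw [coeff_reflect, revAt_le hsN]
    have h2 : N - (N - s) = s := by omega
    simp only [h2]
    ring
  rw [show (pairB N (reflect N f) h : ℂ) = ∑ s ∈ Finset.range (N+1),
      ((s.factorial * (N-s).factorial : ℂ)) * (reflect N f).coeff s * h.coeff (N-s) from rfl,
    Finset.sum_congr rfl this]
  have := Finset.sum_range_reflect
    (fun t => (t.factorial * (N-t).factorial : ℂ) * f.coeff t * h.coeff t) (N+1)
  simpa using this

open Polynomial Finset

lemma pair_u (N j β : ℕ) (hβj : β ≤ j) (hjN : j ≤ N) (c : ℂ) (hc : c ≠ 0)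
    (f : ℂ[X]) (hf : f.natDegree ≤ N) :
    pairB N (reflect N f) (X ^ β * (X + C c) ^ (N - β))
      = (β.factorial * (N - β).factorial : ℂ) * c ^ (N - β) * (hasseDeriv β f).eval c⁻¹ := by
  have hβN : β ≤ N := hβj.trans hjN
  rw [pair_reflect]
  have hdeg : (hasseDeriv β f).natDegree < N + 1 - β := by
    have := natDegree_hasseDeriv_le f β
    omega
  rw [eval_eq_sum_range' hdeg]
  set g : ℕ → ℂ := fun t => (t.factorial * (N-t).factorial : ℂ) * f.coeff t *
      (X ^ β * (X + C c) ^ (N - β) : ℂ[X]).coeff t with hg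
  have hsplit : ∑ t ∈ Finset.range (N+1), g t = ∑ t ∈ Finset.Ico β (N+1), g t := by
    rw [Finset.range_eq_Ico, ← Finset.sum_Ico_consecutive _ (Nat.zero_le β) (by omega : β ≤ N+1)]
    have : ∑ t ∈ Finset.Ico 0 β, g t = 0 := by
      apply Finset.sum_eq_zero
      intro t ht
      rw [Finset.mem_Ico] at ht
      simp only [hg, coeff_X_pow_mul', if_neg (by omega : ¬ β ≤ t), mul_zero]
    rw [this, zero_add]
  rw [hsplit, Finset.sum_Ico_eq_sum_range]
  simp only [show N + 1 - β = N - β + 1 from by omega]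
  rw [Finset.mul_sum]
  refine Finset.sum_congr rfl fun t' ht' => ?_
  rw [Finset.mem_range] at ht'
  have ht'N : t' ≤ N - β := by omega
  simp only [hg, coeff_X_pow_mul', if_pos (by omega : β ≤ β + t'), hasseDeriv_coeff]
  rw [show β + t' - β = t' from by omega, coeff_X_add_C_pow]
  rw [Nat.cast_choose ℂ ht'N, Nat.cast_choose ℂ (by omega : β ≤ t' + β)]
  rw [show N - (β + t') = N - β - t' from by omega,
    show t' + β = β + t' from by omega]
  rw [show (N - β : ℕ) - t' = N - β - t' from rfl]
  have hpow : (c : ℂ) ^ (N - β) = c ^ (N - β - t') * c ^ t' := by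
    rw [← pow_add]; congr 1; omega
  rw [hpow]
  have f1 : ((β + t').factorial : ℂ) ≠ 0 := Nat.cast_ne_zero.2 (Nat.factorial_ne_zero _)
  have f2 : ((N - β - t').factorial : ℂ) ≠ 0 := Nat.cast_ne_zero.2 (Nat.factorial_ne_zero _)
  have f3 : ((β).factorial : ℂ) ≠ 0 := Nat.cast_ne_zero.2 (Nat.factorial_ne_zero _)
  have f4 : ((t').factorial : ℂ) ≠ 0 := Nat.cast_ne_zero.2 (Nat.factorial_ne_zero _)
  have f5 : ((N - β).factorial : ℂ) ≠ 0 := Nat.cast_ne_zero.2 (Nat.factorial_ne_zero _)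
  field_simp
  rw [Nat.add_sub_cancel_left]; field_simp; rw [one_div_pow]; field_simp

open Polynomial Finset Module

noncomputable def reflectL (N : ℕ) : ℂ[X] →ₗ[ℂ] ℂ[X] where
  toFun := reflect N
  map_add' := fun x y => reflect_add x y N
  map_smul' := fun a p => by
    ext n; simp [coeff_reflect, coeff_smul]

lemma q_mul_mem (k j D : ℕ) (c : Fin k → ℂ) (g : Fin k) (q : ℂ[X]) (hq : q.natDegree < j + 1) :
    q * (X + C (c g)) ^ D ∈ Submodule.span ℂ (Set.range (fun p : Fin k × Fin (j+1) =>
      (X:ℂ[X])^(p.2:ℕ) * (X + C (c p.1))^D)) := by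
  have hrepr : q * (X + C (c g)) ^ D = ∑ m ∈ Finset.range (j+1),
      (monomial m (q.coeff m) : ℂ[X]) * (X + C (c g)) ^ D := by
    conv_lhs => rw [q.as_sum_range' (j+1) hq]
    rw [Finset.sum_mul]
  rw [hrepr]
  refine Submodule.sum_mem _ fun m hm => ?_
  rw [Finset.mem_range] at hm
  have : (monomial m (q.coeff m) : ℂ[X]) * (X + C (c g)) ^ D
      = (q.coeff m) • ((X:ℂ[X])^m * (X + C (c g)) ^ D) := by
    rw [← C_mul_X_pow_eq_monomial, smul_eq_C_mul]; ring
  rw [this]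
  exact Submodule.smul_mem _ _ (Submodule.subset_span ⟨(g, ⟨m, hm⟩), rfl⟩)

lemma u_mem (k j D : ℕ) (c : Fin k → ℂ) (g : Fin k) (β : ℕ) (hβ : β ≤ j) :
    (X:ℂ[X])^β * (X + C (c g)) ^ (D + j - β) ∈ Submodule.span ℂ (Set.range
      (fun p : Fin k × Fin (j+1) => (X:ℂ[X])^(p.2:ℕ) * (X + C (c p.1))^D)) := by
  have h1 : (X:ℂ[X])^β * (X + C (c g)) ^ (D + j - β)
      = ((X:ℂ[X])^β * (X + C (c g)) ^ (j - β)) * (X + C (c g)) ^ D := by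
    rw [show D + j - β = (j - β) + D from by omega, pow_add]; ring
  rw [h1]
  apply q_mul_mem
  calc ((X:ℂ[X])^β * (X + C (c g)) ^ (j - β)).natDegree
      ≤ ((X:ℂ[X])^β).natDegree + ((X + C (c g)) ^ (j - β)).natDegree := natDegree_mul_le
    _ ≤ β + (j - β) := by
        rw [natDegree_X_pow, natDegree_pow, natDegree_X_add_C, mul_one]
    _ < j + 1 := by omega

theorem core (k j D : ℕ) (c : Fin k → ℂ) (hc0 : ∀ g, c g ≠ 0)
    (hinj : Function.Injective c) (hkj : k * (j+1) ≤ D + j + 1) :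
    k * (j+1) ≤ finrank ℂ (Submodule.span ℂ (Set.range (fun p : Fin k × Fin (j+1) =>
      (X:ℂ[X])^(p.2:ℕ) * (X + C (c p.1))^D))) := by
  classical
  set N := D + j with hN
  set famU : Fin k × Fin (j+1) → ℂ[X] :=
    fun p => (X:ℂ[X])^(p.2:ℕ) * (X + C (c p.1))^D with hfamU
  set V := Submodule.span ℂ (Set.range famU) with hV
  haveI : FiniteDimensional ℂ V := FiniteDimensional.span_of_finite ℂ (Set.finite_range famU)
  set u : Fin k × Fin (j+1) → ℂ[X] :=
    fun p => (X:ℂ[X])^(p.2:ℕ) * (X + C (c p.1))^(N - (p.2:ℕ)) with hu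
  have humem : ∀ p, u p ∈ V := fun p => u_mem k j D c p.1 (p.2:ℕ) (by omega)
  set w : Fin k × Fin (j+1) → V := fun p => ⟨u p, humem p⟩ with hw
  -- the linear map Λ
  set μ : (degreeLT ℂ (N+1)) →ₗ[ℂ] Module.Dual ℂ V :=
    { toFun := fun f => ((pairB N) (reflectL N (f:ℂ[X]))).domRestrict V
      map_add' := by intro f₁ f₂; ext v; simp
      map_smul' := by intro a f; ext v; simp } with hμ
  set E : Module.Dual ℂ V →ₗ[ℂ] (Fin k × Fin (j+1) → ℂ) :=
    LinearMap.pi (fun p => LinearMap.applyₗ (w p)) with hE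
  set Λ : (degreeLT ℂ (N+1)) →ₗ[ℂ] (Fin k × Fin (j+1) → ℂ) := E.comp μ with hΛ
  have hΛapp : ∀ (f : degreeLT ℂ (N+1)) p, Λ f p = pairB N (reflect N (f:ℂ[X])) (u p) := by
    intro f p
    show (μ f) (w p) = _
    rfl
  -- the divisor G
  set e : Fin k → ℂ := fun g => (c g)⁻¹ with he
  have heinj : Function.Injective e := by
    intro a b hab
    exact hinj (by rwa [he, inv_inj] at hab)
  set G : ℂ[X] := ∏ g : Fin k, (X - C (e g))^(j+1) with hG
  have hGmonic : G.Monic := monic_prod_of_monic _ _ (fun g _ => (monic_X_sub_C _).pow _)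
  have hGdeg : G.natDegree = k * (j+1) := by
    rw [hG, natDegree_prod _ _ (fun g _ => pow_ne_zero _ (X_sub_C_ne_zero _))]
    simp [natDegree_pow, natDegree_X_sub_C, Finset.sum_const, mul_comm]
  -- natDegree bound for members
  have hmemdeg : ∀ f : ℂ[X], f ∈ degreeLT ℂ (N+1) → f.natDegree ≤ N := by
    intro f hf
    rcases eq_or_ne f 0 with rfl | h0
    · simp
    · rw [mem_degreeLT, degree_eq_natDegree h0, Nat.cast_lt] at hf; omega
  -- kernel characterization
  have hker : ∀ f : degreeLT ℂ (N+1), (Λ f = 0 ↔ G ∣ (f : ℂ[X])) := by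
    intro f
    have hfd : (f:ℂ[X]).natDegree ≤ N := hmemdeg _ f.2
    constructor
    · intro h
      apply Fintype.prod_dvd_of_coprime
      · intro a b hab
        exact (IsCoprime.pow (isCoprime_X_sub_C_of_isUnit_sub
          (IsUnit.mk0 _ (sub_ne_zero_of_ne (fun hco => hab (heinj hco))))))
      · intro g
        rw [hasse_dvd]
        intro β hβ
        have h2' := congrFun h (g, ⟨β, hβ⟩)
        rw [hΛapp] at h2'
        have h2 : pairB N (reflect N (f:ℂ[X])) ((X:ℂ[X])^β * (X + C (c g))^(N-β)) = 0 := h2'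
        rw [pair_u N j β (by omega) (by omega) (c g) (hc0 g) _ hfd] at h2
        have f1 : ((β.factorial : ℂ)) ≠ 0 := Nat.cast_ne_zero.2 (Nat.factorial_ne_zero _)
        have f2 : (((N-β).factorial : ℂ)) ≠ 0 := Nat.cast_ne_zero.2 (Nat.factorial_ne_zero _)
        have f3 : (c g) ^ (N - β) ≠ 0 := pow_ne_zero _ (hc0 g)
        simp only [mul_eq_zero] at h2
        rcases h2 with ((h|h)|h) | h
        · exact absurd h f1
        · exact absurd h f2
        · exact absurd h f3
        · exact h
    · intro hdvd
      ext p
      rcases p with ⟨g, β⟩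
      rw [hΛapp]
      show pairB N (reflect N (f:ℂ[X])) ((X:ℂ[X])^(β:ℕ) * (X + C (c g))^(N-(β:ℕ))) = 0
      rw [pair_u N j (β:ℕ) (by omega) (by omega) (c g) (hc0 g) _ hfd]
      have hz : (hasseDeriv (β:ℕ) (f:ℂ[X])).eval ((c g)⁻¹) = 0 := by
        have hdg : (X - C (e g))^(j+1) ∣ (f:ℂ[X]) :=
          dvd_trans (Finset.dvd_prod_of_mem (fun g => (X - C (e g))^(j+1))
            (Finset.mem_univ g)) hdvd
        exact (hasse_dvd _ _ _).1 hdg (β:ℕ) β.2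
      rw [hz]
      simp
  -- the multiplication map Ψ
  have hGq_mem : ∀ q : ℂ[X], q ∈ degreeLT ℂ (N+1-k*(j+1)) → G*q ∈ degreeLT ℂ (N+1) := by
    intro q hq
    rcases eq_or_ne q 0 with rfl | hq0
    · simp only [mul_zero]; exact Submodule.zero_mem _
    · rw [mem_degreeLT] at hq ⊢
      rw [degree_eq_natDegree hq0, Nat.cast_lt] at hq
      rw [degree_mul, degree_eq_natDegree hq0, degree_eq_natDegree hGmonic.ne_zero,
        ← Nat.cast_add, Nat.cast_lt, hGdeg]
      omega
  set Ψ : degreeLT ℂ (N+1-k*(j+1)) →ₗ[ℂ] degreeLT ℂ (N+1) :=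
    { toFun := fun q => ⟨G * (q:ℂ[X]), hGq_mem _ q.2⟩
      map_add' := by intro q₁ q₂; ext; simp [mul_add]
      map_smul' := by intro a q; ext; simp [Algebra.mul_smul_comm] } with hΨ
  have hΨinj : Function.Injective Ψ := by
    intro q₁ q₂ hq
    have : G * (q₁:ℂ[X]) = G * (q₂:ℂ[X]) := congrArg Subtype.val hq
    exact Subtype.ext (mul_left_cancel₀ hGmonic.ne_zero this)
  have hrange : LinearMap.range Ψ = LinearMap.ker Λ := by
    ext f
    simp only [LinearMap.mem_range, LinearMap.mem_ker]
    rw [hker f]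
    constructor
    · rintro ⟨q, hq⟩
      exact ⟨(q:ℂ[X]), by rw [← hq]; rfl⟩
    · rintro ⟨q, hq⟩
      have hfd : (f:ℂ[X]).natDegree ≤ N := hmemdeg _ f.2
      have hqmem : q ∈ degreeLT ℂ (N+1-k*(j+1)) := by
        rcases eq_or_ne q 0 with rfl | hq0
        · exact Submodule.zero_mem _
        · rw [mem_degreeLT, degree_eq_natDegree hq0, Nat.cast_lt]
          have hf0 : (f:ℂ[X]) ≠ 0 := by
            rw [hq]; exact mul_ne_zero hGmonic.ne_zero hq0
          have : (f:ℂ[X]).natDegree = G.natDegree + q.natDegree := by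
            rw [hq, natDegree_mul hGmonic.ne_zero hq0]
          omega
      exact ⟨⟨q, hqmem⟩, Subtype.ext hq.symm⟩
  -- dimension count
  have hdimW : ∀ n : ℕ, finrank ℂ (degreeLT ℂ n) = n := by
    intro n
    rw [LinearEquiv.finrank_eq (Polynomial.degreeLTEquiv ℂ n), Module.finrank_fin_fun]
  haveI : FiniteDimensional ℂ (degreeLT ℂ (N+1)) :=
    Module.Finite.equiv (Polynomial.degreeLTEquiv ℂ (N+1)).symm
  haveI : FiniteDimensional ℂ (degreeLT ℂ (N+1-k*(j+1))) :=
    Module.Finite.equiv (Polynomial.degreeLTEquiv ℂ _).symm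
  have hrk := LinearMap.finrank_range_add_finrank_ker Λ
  rw [← hrange, LinearMap.finrank_range_of_inj hΨinj] at hrk
  rw [hdimW, hdimW] at hrk
  have hrkΛ : finrank ℂ (LinearMap.range Λ) = k * (j+1) := by omega
  -- upper bound for the range
  have hle : LinearMap.range Λ ≤ LinearMap.range E := by
    rw [hΛ]; exact LinearMap.range_comp_le_range μ E
  have h1 : finrank ℂ (LinearMap.range Λ) ≤ finrank ℂ (LinearMap.range E) :=
    Submodule.finrank_mono hle
  have h2 : finrank ℂ (LinearMap.range E) ≤ finrank ℂ (Module.Dual ℂ V) :=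
    LinearMap.finrank_range_le E
  rw [hrkΛ] at h1
  rw [Subspace.dual_finrank_eq] at h2
  exact le_trans h1 (le_trans h2 (le_of_eq rfl))

end UnivariateCore

open MvPolynomial

/-- The power ideal `I_{1,k,d} ⊆ ℂ[x₀,x₁]`, generated by the `k` forms
`(x₀ + ξ^g x₁)^{(k−1)d}`, `g = 0,…,k−1`. -/
noncomputable def powerIdeal1 (k d : ℕ) (ξ : ℂ) :
    Ideal (MvPolynomial (Fin 2) ℂ) :=
  Ideal.span { p | ∃ g : ℕ, g < k ∧
    p = (X (0 : Fin 2) + C (ξ ^ g) * X (1 : Fin 2)) ^ ((k-1)*d) }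

/-- The Hilbert function of `R = ℂ[x₀,x₁]/I_{1,k,d}` in degree `i`. -/
noncomputable def HF1 (k d : ℕ) (ξ : ℂ) (i : ℕ) : ℕ :=
  Module.finrank ℂ ↥(homogeneousSubmodule (Fin 2) ℂ i) -
    Module.finrank ℂ ↥(Submodule.restrictScalars ℂ (powerIdeal1 k d ξ) ⊓
      homogeneousSubmodule (Fin 2) ℂ i)

/-- The weight of a vector `g ∈ (ℤ/kℤ)²`. -/
def wt {k : ℕ} (g : Fin 2 → ZMod k) : ℕ := ∑ l, (g l).val

/-- `N_h`, the number of vectors `g ∈ (ℤ/kℤ)²` of weight `h`. -/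
noncomputable def Nw (k h : ℕ) [NeZero k] : ℕ :=
  (Finset.univ.filter (fun g : Fin 2 → ZMod k => wt g = h)).card

open Module

lemma deg2 (d : Fin 2 →₀ ℕ) : d.degree = d 0 + d 1 := by
  rw [Finsupp.degree_apply,
    Finset.sum_subset (Finset.subset_univ _) (fun x _ hx => Finsupp.notMem_support_iff.mp hx)]
  exact Fin.sum_univ_two d

noncomputable def uvec (i : ℕ) (t : ℕ) : Fin 2 →₀ ℕ :=
  Finsupp.single 0 t + Finsupp.single 1 (i - t)

lemma uvec_apply0 (i t : ℕ) : uvec i t 0 = t := by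
  simp [uvec, Finsupp.single_apply]

lemma uvec_apply1 (i t : ℕ) : uvec i t 1 = i - t := by
  simp [uvec, Finsupp.single_apply]

lemma uvec_deg (i t : ℕ) (h : t ≤ i) : (uvec i t).degree = i := by
  rw [deg2, uvec_apply0, uvec_apply1]; omega

lemma uvec_of (d : Fin 2 →₀ ℕ) (i : ℕ) (hd : d.degree = i) : d = uvec i (d 0) ∧ d 0 ≤ i := by
  rw [deg2] at hd
  constructor
  · ext l
    fin_cases l
    · show d 0 = uvec i (d 0) 0
      rw [uvec_apply0]
    · show d 1 = uvec i (d 0) 1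
      rw [uvec_apply1]; omega
  · omega

noncomputable def homB (i : ℕ) : Fin (i+1) → ↥(homogeneousSubmodule (Fin 2) ℂ i) :=
  fun t => ⟨monomial (uvec i (t:ℕ)) 1, by
    rw [mem_homogeneousSubmodule]
    exact isHomogeneous_monomial 1 (uvec_deg i _ (by omega))⟩

lemma homB_indep (i : ℕ) : LinearIndependent ℂ (homB i) := by
  have h1 : LinearIndependent ℂ (fun t : Fin (i+1) => (monomial (uvec i (t:ℕ)) 1 : MvPolynomial (Fin 2) ℂ)) := by
    have := (MvPolynomial.basisMonomials (Fin 2) ℂ).linearIndependent.comp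
      (fun t : Fin (i+1) => uvec i (t:ℕ))
      (by
        intro a b hab
        have := congrArg (fun d => d 0) hab
        simp only [uvec_apply0] at this
        exact Fin.ext this)
    simp only [coe_basisMonomials] at this; exact this
  exact h1.of_comp (Submodule.subtype _)

lemma homB_repr (i : ℕ) (F : MvPolynomial (Fin 2) ℂ) (hF : F ∈ homogeneousSubmodule (Fin 2) ℂ i) :
    F = ∑ t ∈ Finset.range (i+1), (F.coeff (uvec i t)) • (monomial (uvec i t) 1 : MvPolynomial (Fin 2) ℂ) := by
  have hsupp : F.support ⊆ (Finset.range (i+1)).image (fun t => uvec i t) := by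
    intro d hd
    have hdeg : d.degree = i := by
      rw [mem_homogeneousSubmodule] at hF
      have := hF (mem_support_iff.mp hd)
      rwa [Pi.one_def, ← Finsupp.degree_eq_weight_one] at this
    obtain ⟨hdu, hd0⟩ := uvec_of d i hdeg
    exact Finset.mem_image.2 ⟨d 0, Finset.mem_range.2 (by omega), hdu.symm⟩
  conv_lhs => rw [F.as_sum]
  rw [Finset.sum_subset hsupp (by
    intro d _ hd
    rw [notMem_support_iff.mp hd, monomial_zero])]
  rw [Finset.sum_image (by
    intro a _ b _ hab
    have := congrArg (fun d => d 0) hab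
    simpa only [uvec_apply0] using this)]
  refine Finset.sum_congr rfl fun t _ => ?_
  rw [smul_monomial, smul_eq_mul, mul_one]

lemma homB_span (i : ℕ) : ⊤ ≤ Submodule.span ℂ (Set.range (homB i)) := by
  rintro ⟨F, hF⟩ -
  have hmem : (⟨F, hF⟩ : ↥(homogeneousSubmodule (Fin 2) ℂ i))
      = ∑ t : Fin (i+1), (F.coeff (uvec i (t:ℕ))) • homB i t := by
    apply Subtype.ext
    rw [AddSubmonoidClass.coe_finset_sum]
    simp only [SetLike.val_smul]
    show F = ∑ t : Fin (i+1), (F.coeff (uvec i (t:ℕ))) • (monomial (uvec i (t:ℕ)) 1 : MvPolynomial (Fin 2) ℂ)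
    rw [Fin.sum_univ_eq_sum_range (fun t => (F.coeff (uvec i t)) • (monomial (uvec i t) 1 : MvPolynomial (Fin 2) ℂ))]
    exact homB_repr i F hF
  rw [hmem]
  exact Submodule.sum_mem _ (fun t _ => Submodule.smul_mem _ _ (Submodule.subset_span ⟨t, rfl⟩))

noncomputable def homBasis (i : ℕ) : Basis (Fin (i+1)) ℂ ↥(homogeneousSubmodule (Fin 2) ℂ i) :=
  Basis.mk (homB_indep i) (homB_span i)

lemma finrank_hom (i : ℕ) : Module.finrank ℂ ↥(homogeneousSubmodule (Fin 2) ℂ i) = i + 1 := by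
  haveI := Module.Finite.of_basis (homBasis i)
  rw [Module.finrank_eq_card_basis (homBasis i), Fintype.card_fin]


lemma homogComp_mul (p q : MvPolynomial (Fin 2) ℂ) (D n : ℕ) (hp : p.IsHomogeneous D)
    (hD : D ≤ n) :
    homogeneousComponent n (q * p) = homogeneousComponent (n - D) q * p := by
  conv_lhs => rw [← sum_homogeneousComponent q, Finset.sum_mul, map_sum]
  have hterm : ∀ m : ℕ, (homogeneousComponent m q * p) ∈
      homogeneousSubmodule (Fin 2) ℂ (m + D) :=
    fun m => (mem_homogeneousSubmodule _ _).mpr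
      ((homogeneousComponent_isHomogeneous m q).mul hp)
  rw [Finset.sum_eq_single (n - D)]
  · rw [homogeneousComponent_of_mem (hterm _), if_pos (by omega)]
  · intro m _ hne
    rw [homogeneousComponent_of_mem (hterm _), if_neg (by omega)]
  · intro hnot
    rw [Finset.mem_range] at hnot
    rw [homogeneousComponent_eq_zero _ q (by omega), zero_mul, map_zero]

lemma mon_eq (j t : ℕ) : (monomial (uvec j t) 1 : MvPolynomial (Fin 2) ℂ)
    = X 0 ^ t * X 1 ^ (j - t) := by
  rw [show uvec j t = Finsupp.single 0 t + Finsupp.single 1 (j - t) from rfl,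
    X_pow_eq_monomial, X_pow_eq_monomial, monomial_mul, mul_one]

lemma hL_homog (c : ℂ) : (X 0 + C c * X 1 : MvPolynomial (Fin 2) ℂ).IsHomogeneous 1 :=
  (isHomogeneous_X _ _).add (by simpa using (isHomogeneous_C (Fin 2) c).mul (isHomogeneous_X _ 1))

lemma famM_homog (D j a b : ℕ) (hab : a + b = j) (c : ℂ) :
    (X 0 ^ a * X 1 ^ b * (X 0 + C c * X 1) ^ D : MvPolynomial (Fin 2) ℂ).IsHomogeneous (D + j) := by
  have h := (((isHomogeneous_X ℂ (0 : Fin 2)).pow a).mul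
    ((isHomogeneous_X ℂ (1 : Fin 2)).pow b)).mul ((hL_homog c).pow D)
  have he : 1 * a + 1 * b + 1 * D = D + j := by omega
  exact he ▸ h

lemma q_mul_mem_M (k D j : ℕ) (ξ : ℂ) (g : Fin k) (y : MvPolynomial (Fin 2) ℂ) :
    (homogeneousComponent j y) * (X 0 + C (ξ^(g:ℕ)) * X 1) ^ D ∈
      Submodule.span ℂ (Set.range (fun p : Fin k × Fin (j+1) =>
        (X 0 ^ (p.2:ℕ) * X 1 ^ (j - (p.2:ℕ)) * (X 0 + C (ξ^(p.1:ℕ)) * X 1) ^ D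
          : MvPolynomial (Fin 2) ℂ))) := by
  set q := homogeneousComponent j y with hq
  have hrepr := homB_repr j q (homogeneousComponent_mem j y)
  rw [hrepr, Finset.sum_mul]
  refine Submodule.sum_mem _ fun t ht => ?_
  rw [Finset.mem_range] at ht
  rw [smul_mul_assoc, mon_eq]
  exact Submodule.smul_mem _ _ (Submodule.subset_span ⟨(g, ⟨t, ht⟩), rfl⟩)


lemma inter_eq_span (k d j : ℕ) (hk : 2 ≤ k) (ξ : ℂ) :
    (Submodule.restrictScalars ℂ (powerIdeal1 k d ξ) ⊓
        homogeneousSubmodule (Fin 2) ℂ ((k-1)*d + j))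
      = Submodule.span ℂ (Set.range (fun p : Fin k × Fin (j+1) =>
          (X 0 ^ (p.2:ℕ) * X 1 ^ (j - (p.2:ℕ)) * (X 0 + C (ξ^(p.1:ℕ)) * X 1) ^ ((k-1)*d)
            : MvPolynomial (Fin 2) ℂ))) := by
  set D := (k-1)*d with hD
  apply le_antisymm
  · rintro x ⟨hxI, hxH⟩
    rw [SetLike.mem_coe, Submodule.restrictScalars_mem, powerIdeal1, Ideal.span,
      Submodule.mem_span_set] at hxI
    obtain ⟨c, hsupp, rfl⟩ := hxI
    rw [SetLike.mem_coe, mem_homogeneousSubmodule] at hxH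
    have hx : homogeneousComponent (D + j) (c.sum fun mi r => r • mi)
        = c.sum fun mi r => r • mi := by
      rw [homogeneousComponent_of_mem ((mem_homogeneousSubmodule _ _).mpr hxH)]
      simp
    rw [← hx, Finsupp.sum, map_sum]
    refine Submodule.sum_mem _ fun p hp => ?_
    obtain ⟨g, hg, rfl⟩ := hsupp hp
    rw [smul_eq_mul, homogComp_mul _ _ D (D+j) (by
        have := (hL_homog (ξ^g)).pow D
        rwa [one_mul] at this) (by omega)]
    rw [show D + j - D = j from by omega]
    exact q_mul_mem_M k D j ξ ⟨g, hg⟩ (c _)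
  · rw [Submodule.span_le]
    rintro x ⟨p, rfl⟩
    constructor
    · rw [SetLike.mem_coe, Submodule.restrictScalars_mem]
      exact Ideal.mul_mem_left _ _ (Ideal.subset_span ⟨(p.1:ℕ), p.1.2, rfl⟩)
    · rw [SetLike.mem_coe, mem_homogeneousSubmodule]
      exact famM_homog D j (p.2:ℕ) (j - (p.2:ℕ)) (by have := p.2.2; omega) (ξ^(p.1:ℕ))


lemma famrank (k D j : ℕ) (hk : 2 ≤ k) (ξ : ℂ) (hξ : IsPrimitiveRoot ξ k)
    (hkj : k*(j+1) ≤ D + j + 1) :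
    finrank ℂ ↥(Submodule.span ℂ (Set.range (fun p : Fin k × Fin (j+1) =>
        (X 0 ^ (p.2:ℕ) * X 1 ^ (j - (p.2:ℕ)) * (X 0 + C (ξ^(p.1:ℕ)) * X 1) ^ D
          : MvPolynomial (Fin 2) ℂ)))) = k * (j+1) := by
  set famM : Fin k × Fin (j+1) → MvPolynomial (Fin 2) ℂ :=
    fun p => X 0 ^ (p.2:ℕ) * X 1 ^ (j - (p.2:ℕ)) * (X 0 + C (ξ^(p.1:ℕ)) * X 1) ^ D with hfamM
  haveI : Module.Finite ℂ ↥(Submodule.span ℂ (Set.range famM)) :=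
    FiniteDimensional.span_of_finite ℂ (Set.finite_range famM)
  apply le_antisymm
  · have h := finrank_range_le_card (R := ℂ) famM
    rw [Set.finrank] at h
    refine h.trans ?_
    simp [Fintype.card_prod]
  · set assign : Fin 2 → Polynomial ℂ := fun l => if l = 0 then Polynomial.X else 1 with hassign
    set φ := (aeval assign : MvPolynomial (Fin 2) ℂ →ₐ[ℂ] Polynomial ℂ).toLinearMap with hφ
    set c : Fin k → ℂ := fun g => ξ^(g:ℕ) with hc
    have hφf : ∀ p : Fin k × Fin (j+1), φ (famM p)
        = (Polynomial.X:Polynomial ℂ)^(p.2:ℕ) * (Polynomial.X + Polynomial.C (c p.1))^D := by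
      intro p
      show aeval assign (famM p) = _
      rw [hfamM]
      simp only [map_mul, map_pow, map_add, aeval_X, aeval_C]
      rw [hassign]
      simp only [if_pos rfl, if_neg (by decide : ¬ (1:Fin 2) = 0)]
      rw [Polynomial.algebraMap_eq]
      simp [hc, Polynomial.C_pow]
    have hmap : Submodule.map φ (Submodule.span ℂ (Set.range famM))
        = Submodule.span ℂ (Set.range (fun p : Fin k × Fin (j+1) =>
          (Polynomial.X:Polynomial ℂ)^(p.2:ℕ) * (Polynomial.X + Polynomial.C (c p.1))^D)) := by
      rw [Submodule.map_span, ← Set.range_comp]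
      have hfe : (φ ∘ famM) = (fun p : Fin k × Fin (j+1) =>
          (Polynomial.X:Polynomial ℂ)^(p.2:ℕ) * (Polynomial.X + Polynomial.C (c p.1))^D) :=
        funext hφf
      rw [hfe]
    have hc0 : ∀ g, c g ≠ 0 := fun g => pow_ne_zero _ (hξ.ne_zero (by omega))
    have hinj : Function.Injective c := by
      intro a b hab
      exact Fin.ext (hξ.pow_inj a.2 b.2 hab)
    calc k * (j+1) ≤ finrank ℂ ↥(Submodule.span ℂ (Set.range (fun p : Fin k × Fin (j+1) =>
          (Polynomial.X:Polynomial ℂ)^(p.2:ℕ) * (Polynomial.X + Polynomial.C (c p.1))^D))) :=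
        core k j D c hc0 hinj hkj
      _ = finrank ℂ ↥(Submodule.map φ (Submodule.span ℂ (Set.range famM))) := by rw [hmap]
      _ ≤ finrank ℂ ↥(Submodule.span ℂ (Set.range famM)) := Submodule.finrank_map_le φ _


lemma wt_eq {k : ℕ} (g : Fin 2 → ZMod k) : wt g = (g 0).val + (g 1).val := by
  rw [wt, Fin.sum_univ_two]

lemma Nw_eq (k h : ℕ) (hk : 0 < k) [NeZero k] : Nw k h = min h (k-1) + 1 - (h+1-k) := by
  classical
  rw [Nw]
  have hcard : (Finset.univ.filter (fun g : Fin 2 → ZMod k => wt g = h)).card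
      = ((Finset.range k).filter (fun a => a ≤ h ∧ h - a < k)).card := by
    apply Finset.card_bij (fun g _ => (g 0).val)
    · intro g hg
      rw [Finset.mem_filter] at hg
      rw [wt_eq] at hg
      have h0 := ZMod.val_lt (g 0)
      have h1 := ZMod.val_lt (g 1)
      rw [Finset.mem_filter, Finset.mem_range]
      omega
    · intro g₁ hg₁ g₂ hg₂ hval
      rw [Finset.mem_filter, wt_eq] at hg₁ hg₂
      have e0 : (g₁ 0) = g₂ 0 := ZMod.val_injective k hval
      have e1 : (g₁ 1) = g₂ 1 := by
        apply ZMod.val_injective k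
        omega
      funext l
      fin_cases l
      · exact e0
      · exact e1
    · intro a ha
      rw [Finset.mem_filter, Finset.mem_range] at ha
      refine ⟨(fun l => if l = 0 then ((a:ℕ):ZMod k) else ((h-a:ℕ):ZMod k)), ?_, ?_⟩
      · rw [Finset.mem_filter]
        refine ⟨Finset.mem_univ _, ?_⟩
        rw [wt_eq]
        show ((a:ℕ):ZMod k).val + ((h-a:ℕ):ZMod k).val = h
        rw [ZMod.val_cast_of_lt ha.1, ZMod.val_cast_of_lt ha.2.2]
        omega
      · show ((a:ℕ):ZMod k).val = a
        exact ZMod.val_cast_of_lt ha.1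
  rw [hcard]
  have hset : (Finset.range k).filter (fun a => a ≤ h ∧ h - a < k)
      = Finset.Icc (h+1-k) (min h (k-1)) := by
    ext a
    rw [Finset.mem_filter, Finset.mem_range, Finset.mem_Icc]
    omega
  rw [hset, Nat.card_Icc]


lemma Nw_big (k h : ℕ) (hk : 0 < k) [NeZero k] (hh : 2*k - 1 ≤ h) : Nw k h = 0 := by
  rw [Nw_eq _ _ hk]; omega

open scoped Classical in
lemma sum_eval (k' j e : ℕ) [NeZero (k'+2)] :
    ∑ h ∈ (Finset.range ((k'+1)*(e+2))).filter
        (fun h => ∃ m : ℕ, (k'+1)*(j+2+e) + j = h + (k'+2) * m),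
      Nw (k'+2) h * ((1 + ((k'+1)*(j+2+e) + j - h)/(k'+2)).choose 1 - (1 + j).choose 1)
    = (k'+1)*(e+1) := by
  have hK : 0 < k'+2 := by omega
  set K := k'+2 with hKdef
  set A := (k'+1)*(e+2) with hAdef
  set i := (k'+1)*(j+2+e) + j with hidef
  set T := (Finset.range A).filter (fun h => ∃ m : ℕ, i = h + K * m) with hT
  have hqr := Nat.div_add_mod i K
  set q := i / K with hq
  set r := i % K with hr
  have hrK : r < K := Nat.mod_lt _ hK
  show ∑ h ∈ T, Nw K h * ((1 + (i - h)/K).choose 1 - (1 + j).choose 1) = (k'+1)*(e+1)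
  clear_value K A i T q r
  have hiA : i = A + K*j := by rw [hidef, hAdef, hKdef]; ring
  have hA2 : 2*(k'+1) ≤ A := by rw [hAdef]; nlinarith
  have hAr : r < A := by omega
  have hmain : K*q + r = A + K*j := by rw [hqr]; exact hiA
  have hjq : j < q := by
    by_contra hc
    push_neg at hc
    have h2 : K*q ≤ K*j := Nat.mul_le_mul_left _ hc
    linarith
  obtain ⟨Q1, hQ1⟩ : ∃ t, q = j+1+t := ⟨q-j-1, by omega⟩
  have hdist : K*(j+1+Q1) = K*j + K*(1+Q1) := by ring
  have hqr' : K*(j+1+Q1) + r = i := by rw [← hQ1]; exact hqr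
  have hE : A = K*(1+Q1) + r := by
    rw [hQ1] at hmain; linarith
  have hiK : i = (r+K) + K*(j+Q1) := by
    have h3 : K*(j+1+Q1) = K*(j+Q1) + K := by ring
    linarith
  have hrT : r ∈ T := by
    rw [hT, Finset.mem_filter, Finset.mem_range]
    exact ⟨hAr, ⟨q, by linarith⟩⟩
  have hvanish : ∀ h ∈ T, h ≠ r → h ≠ r + K → Nw K h * ((1 + (i - h)/K).choose 1 - (1 + j).choose 1) = 0 := by
    intro h hhT hne1 hne2
    rw [hT, Finset.mem_filter, Finset.mem_range] at hhT
    obtain ⟨hhA, m, hm⟩ := hhT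
    have hmle : m + 2 ≤ j + 1 + Q1 := by
      rcases Nat.lt_or_ge m (j+Q1) with hlt | hge
      · omega
      · exfalso
        rcases Nat.eq_or_lt_of_le hge with heq | hgt
        · apply hne2
          have h4 : K*(j+1+Q1) = K*m + K := by rw [← heq]; ring
          linarith [hm, hqr']
        · rcases Nat.eq_or_lt_of_le (by omega : j+1+Q1 ≤ m) with heq2 | hgt2
          · apply hne1
            rw [← heq2] at hm
            linarith [hqr']
          · have h7 : K*(j+1+Q1+1) = K*(j+1+Q1) + K := by ring
            have h6 : K*(j+1+Q1+1) ≤ K*m :=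
              Nat.mul_le_mul_left _ (by omega)
            linarith [hm, hqr', hrK]
    have h2K : 2*K ≤ h := by
      have h8 : K*(m+2) ≤ K*(j+1+Q1) := Nat.mul_le_mul_left _ hmle
      have h9 : K*(m+2) = K*m + 2*K := by ring
      linarith [hm, hqr']
    rw [Nw_big K h hK (by omega), zero_mul]
  -- evaluate F r
  have hFr : Nw K r * ((1 + (i - r)/K).choose 1 - (1 + j).choose 1) = (r+1) * (1+Q1) := by
    rw [Nw_eq _ _ hK, show min r (K-1) + 1 - (r+1-K) = r + 1 from by omega]
    rw [show i - r = K * q from Nat.sub_eq_of_eq_add (by linarith),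
      Nat.mul_div_cancel_left q hK, Nat.choose_one_right, Nat.choose_one_right]
    congr 1
    omega
  by_cases hcase : r + K < A
  · -- two terms
    have hrKT : r + K ∈ T := by
      rw [hT, Finset.mem_filter, Finset.mem_range]
      exact ⟨hcase, ⟨j+Q1, by linarith⟩⟩
    have hsub : ({r, r+K} : Finset ℕ) ⊆ T := by
      intro x hx
      rcases Finset.mem_insert.mp hx with rfl | hx'
      · exact hrT
      · rw [Finset.mem_singleton.mp hx']; exact hrKT
    rw [← Finset.sum_subset hsub (fun h hh hnot => hvanish h hh
        (fun hh1 => hnot (by rw [hh1]; exact Finset.mem_insert_self _ _))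
        (fun hh2 => hnot (by rw [hh2]; exact Finset.mem_insert_of_mem (Finset.mem_singleton_self _))))]
    rw [Finset.sum_pair (by omega : r ≠ r + K)]
    rw [hFr]
    have hFrK : Nw K (r+K) * ((1 + (i - (r+K))/K).choose 1 - (1 + j).choose 1)
        = (K-1-r) * Q1 := by
      rw [Nw_eq _ _ hK, show min (r+K) (K-1) + 1 - (r+K+1-K) = K-1-r from by omega]
      rw [show i - (r+K) = K * (j+Q1) from Nat.sub_eq_of_eq_add (by linarith),
        Nat.mul_div_cancel_left _ hK, Nat.choose_one_right, Nat.choose_one_right]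
      congr 1
      omega
    rw [hFrK]
    rw [hAdef, hKdef] at hE
    rw [hKdef, show k'+2-1 = k'+1 from rfl]
    have hrle : r ≤ k'+1 := by omega
    zify [hrle]
    have hE' : ((k'+1:ℤ))*(e+2) = (k'+2)*(1+Q1) + r := by exact_mod_cast congrArg (Nat.cast : ℕ → ℤ) hE
    linear_combination -hE'
  · -- one term
    have hsub : ({r} : Finset ℕ) ⊆ T := by
      intro x hx
      rw [Finset.mem_singleton.mp hx]; exact hrT
    rw [← Finset.sum_subset hsub (fun h hh hnot => hvanish h hh
        (fun hh1 => hnot (by rw [hh1]; exact Finset.mem_singleton_self _))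
        (fun hh2 => by
          rw [hT, Finset.mem_filter, Finset.mem_range] at hh
          omega))]
    rw [Finset.sum_singleton, hFr]
    have hQ1z : Q1 = 0 := by
      have h1 : K*(1+Q1) ≤ K*1 := by omega
      have h3 : 1+Q1 ≤ 1 := Nat.le_of_mul_le_mul_left (by linarith) hK
      omega
    rw [hQ1z]
    rw [hAdef, hKdef] at hE
    rw [hQ1z] at hE
    zify
    have hE' : ((k'+1:ℤ))*(e+2) = (k'+2)*(1+0) + r := by exact_mod_cast congrArg (Nat.cast : ℕ → ℤ) hE
    linear_combination -hE'


open MvPolynomial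

open scoped Classical in
theorem stmt19 (k d : ℕ) [NeZero k] (hk : 2 ≤ k) (hd : 2 ≤ d)
    (ξ : ℂ) (hξ : IsPrimitiveRoot ξ k) :
    ∀ j ≤ d - 2,
      HF1 k d ξ ((k-1)*d + j) = 1 + (k-1)*(d-j) - k ∧
      HF1 k d ξ ((k-1)*d + j)
        = ∑ h ∈ (Finset.range ((k-1)*(d-j))).filter
            (fun h => ∃ m : ℕ, (k-1)*d + j = h + k * m),
          Nw k h * ((1 + ((k-1)*d + j - h)/k).choose 1 - (1 + j).choose 1) := by
  intro j hj
  obtain ⟨k', rfl⟩ : ∃ k', k = k'+2 := ⟨k-2, by omega⟩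
  obtain ⟨e, rfl⟩ : ∃ e, d = j+2+e := ⟨d-j-2, by omega⟩
  have hkj : (k'+2) * (j+1) ≤ (k'+2-1)*(j+2+e) + j + 1 := by
    rw [show k'+2-1 = k'+1 from rfl]
    nlinarith [k'*j, k'*e]
  have hHF : HF1 (k'+2) (j+2+e) ξ ((k'+2-1)*(j+2+e) + j) = (k'+1)*(e+1) := by
    rw [HF1, inter_eq_span (k'+2) (j+2+e) j (by omega) ξ,
      famrank (k'+2) ((k'+2-1)*(j+2+e)) j (by omega) ξ hξ hkj, finrank_hom]
    rw [show k'+2-1 = k'+1 from rfl]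
    rw [show (k'+1)*(j+2+e) + j + 1 = (k'+1)*(e+1) + (k'+2)*(j+1) from by ring]
    exact Nat.add_sub_cancel _ _
  constructor
  · rw [hHF, show k'+2-1 = k'+1 from rfl, show j+2+e-j = e+2 from by omega]
    rw [show 1 + (k'+1)*(e+2) = (k'+1)*(e+1) + (k'+2) from by ring]
    exact (Nat.add_sub_cancel _ _).symm
  · rw [hHF]
    simp only [show k'+2-1 = k'+1 from rfl, show j+2+e-j = e+2 from by omega]
    exact (sum_eval k' j e).symm
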